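/- Let s₁, …, sₙ and t₁, …, tₙ be bounded operators on Hilbert spaces H and K respectively. Then the norm of Σᵢ sᵢ ⊗ tᵢ acting on the Hilbert space tensor product H ⊗ K is at most ‖Σᵢ sᵢsᵢ*‖^{1/2} · ‖Σᵢ tᵢ*tᵢ‖^{1/2}. -/

import Mathlib

open scoped InnerProductSpace

open ContinuousLinearMap in
/-- For a positive operator there is `R` with `R† ∘ R = S`. -/
private lemma exists_adjoint_comp_eq {K : Type*} [NormedAddCommGroup K]
    [InnerProductSpace ℂ K] [CompleteSpace K]
    (S : K →L[ℂ] K) (hS : 0 ≤ S) : ∃ R : K →L[ℂ] K, adjoint R ∘L R = S := by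
  refine ⟨CFC.sqrt S, ?_⟩
  have h1 : IsSelfAdjoint (CFC.sqrt S) := (CFC.sqrt_nonneg (a := S)).isSelfAdjoint
  rw [← star_eq_adjoint, h1.star_eq]
  exact CFC.sqrt_mul_sqrt_self S hS

open ContinuousLinearMap in
private lemma selfadj_le_norm_smul_one {K : Type*} [NormedAddCommGroup K]
    [InnerProductSpace ℂ K] [CompleteSpace K]
    (S : K →L[ℂ] K) (hS : IsSelfAdjoint S) : S ≤ ‖S‖ • 1 := by
  have := hS.le_algebraMap_norm_self (A := K →L[ℂ] K)
  simpa [Algebra.algebraMap_eq_smul_one] using this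

open ContinuousLinearMap in
/-- Let `s₁, …, sₙ ∈ B(H)` and `t₁, …, tₙ ∈ B(K)`.  The Hilbert-space tensor product
`H ⊗₂ K` is axiomatized as a Hilbert space `L` together with a bilinear map
`tp : H → K → L` satisfying `⟪tp ξ η, tp ξ' η'⟫ = ⟪ξ, ξ'⟫ ⟪η, η'⟫` and having dense
linear span.  If `V ∈ B(L)` acts as `Σᵢ sᵢ ⊗ tᵢ` on elementary tensors, then
`‖Σᵢ sᵢ ⊗ tᵢ‖ ≤ ‖Σᵢ sᵢ sᵢ*‖^{1/2} ‖Σᵢ tᵢ* tᵢ‖^{1/2}`. -/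
theorem norm_sum_tensor_le {H K L : Type*}
    [NormedAddCommGroup H] [InnerProductSpace ℂ H] [CompleteSpace H]
    [NormedAddCommGroup K] [InnerProductSpace ℂ K] [CompleteSpace K]
    [NormedAddCommGroup L] [InnerProductSpace ℂ L] [CompleteSpace L]
    (tp : H →ₗ[ℂ] K →ₗ[ℂ] L)
    (htp : ∀ (ξ ξ' : H) (η η' : K),
      ⟪tp ξ η, tp ξ' η'⟫_ℂ = ⟪ξ, ξ'⟫_ℂ * ⟪η, η'⟫_ℂ)
    (hdense : (Submodule.span ℂ
        (Set.range fun p : H × K => tp p.1 p.2)).topologicalClosure = ⊤)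
    (n : ℕ) (s : Fin n → H →L[ℂ] H) (t : Fin n → K →L[ℂ] K)
    (V : L →L[ℂ] L)
    (hV : ∀ (ξ : H) (η : K), V (tp ξ η) = ∑ i, tp (s i ξ) (t i η)) :
    ‖V‖ ≤ Real.sqrt ‖∑ i, (s i) ∘L (ContinuousLinearMap.adjoint (s i))‖ *
          Real.sqrt ‖∑ i, (ContinuousLinearMap.adjoint (t i)) ∘L (t i)‖ := by
  set A : H →L[ℂ] H := ∑ i, (s i) ∘L (adjoint (s i)) with hA
  set T : K →L[ℂ] K := ∑ i, (adjoint (t i)) ∘L (t i) with hT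
  set C : ℝ := Real.sqrt ‖A‖ * Real.sqrt ‖T‖ with hC
  -- expansion of inner products of sums of elementary tensors
  have hexp : ∀ {m p : ℕ} (ξ : Fin m → H) (η : Fin m → K) (α : Fin p → H) (β : Fin p → K),
      ⟪∑ j, tp (ξ j) (η j), ∑ k, tp (α k) (β k)⟫_ℂ
        = ∑ j, ∑ k, ⟪ξ j, α k⟫_ℂ * ⟪η j, β k⟫_ℂ := by
    intro m p ξ η α β
    rw [sum_inner]
    refine Finset.sum_congr rfl fun j _ => ?_
    rw [inner_sum]
    exact Finset.sum_congr rfl fun k _ => htp _ _ _ _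
  -- positivity of T and A
  have hT0 : (0 : K →L[ℂ] K) ≤ T := by
    refine Finset.sum_nonneg fun i _ => ?_
    simpa [ContinuousLinearMap.star_eq_adjoint, ContinuousLinearMap.mul_def]
      using star_mul_self_nonneg (t i)
  have hA0 : (0 : H →L[ℂ] H) ≤ A := by
    refine Finset.sum_nonneg fun i _ => ?_
    simpa [ContinuousLinearMap.star_eq_adjoint, ContinuousLinearMap.mul_def]
      using mul_star_self_nonneg (s i)
  have ru : ∀ z : L, (⟪z, z⟫_ℂ).re = ‖z‖ ^ 2 := fun z => by
    rw [← RCLike.re_to_complex]; exact inner_self_eq_norm_sq z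
  -- the two quadratic estimates
  have hu : ∀ (m : ℕ) (ξ : Fin m → H) (η : Fin m → K),
      ∑ i, ‖∑ j, tp (ξ j) (t i (η j))‖ ^ 2 ≤ ‖T‖ * ‖∑ j, tp (ξ j) (η j)‖ ^ 2 := by
    intro m ξ η
    set S : K →L[ℂ] K := ‖T‖ • 1 - T with hS
    have hS0 : (0 : K →L[ℂ] K) ≤ S :=
      sub_nonneg.mpr (selfadj_le_norm_smul_one T hT0.isSelfAdjoint)
    obtain ⟨R, hR⟩ := exists_adjoint_comp_eq S hS0
    set w : L := ∑ j, tp (ξ j) (R (η j)) with hw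
    set u : Fin n → L := fun i => ∑ j, tp (ξ j) (t i (η j)) with hud
    set x : L := ∑ j, tp (ξ j) (η j) with hx
    have e1 : (∑ i, ⟪u i, u i⟫_ℂ)
        = ∑ j, ∑ j', ⟪ξ j, ξ j'⟫_ℂ * ⟪T (η j), η j'⟫_ℂ := by
      have h0 : ∀ i : Fin n, ⟪u i, u i⟫_ℂ
          = ∑ j, ∑ j', ⟪ξ j, ξ j'⟫_ℂ * ⟪t i (η j), t i (η j')⟫_ℂ :=
        fun i => hexp _ _ _ _
      rw [Finset.sum_congr rfl fun i _ => h0 i, Finset.sum_comm]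
      refine Finset.sum_congr rfl fun j _ => ?_
      rw [Finset.sum_comm]
      refine Finset.sum_congr rfl fun j' _ => ?_
      rw [← Finset.mul_sum]
      congr 1
      rw [hT, ContinuousLinearMap.sum_apply, sum_inner]
      exact Finset.sum_congr rfl fun i _ => by
        rw [ContinuousLinearMap.comp_apply, ContinuousLinearMap.adjoint_inner_left]
    have e2 : ⟪w, w⟫_ℂ = ∑ j, ∑ j', ⟪ξ j, ξ j'⟫_ℂ * ⟪S (η j), η j'⟫_ℂ := by
      rw [hw, hexp]
      refine Finset.sum_congr rfl fun j _ => Finset.sum_congr rfl fun j' _ => ?_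
      congr 1
      rw [← hR, ContinuousLinearMap.comp_apply, ContinuousLinearMap.adjoint_inner_left]
    have e3 : ⟪x, x⟫_ℂ = ∑ j, ∑ j', ⟪ξ j, ξ j'⟫_ℂ * ⟪η j, η j'⟫_ℂ := hexp _ _ _ _
    have hkey : (∑ i, ⟪u i, u i⟫_ℂ) + ⟪w, w⟫_ℂ = (‖T‖ : ℂ) * ⟪x, x⟫_ℂ := by
      rw [e1, e2, e3, ← Finset.sum_add_distrib, Finset.mul_sum]
      refine Finset.sum_congr rfl fun j _ => ?_
      rw [← Finset.sum_add_distrib, Finset.mul_sum]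
      refine Finset.sum_congr rfl fun j' _ => ?_
      have hTS : ⟪T (η j), η j'⟫_ℂ + ⟪S (η j), η j'⟫_ℂ
          = (‖T‖ : ℂ) * ⟪η j, η j'⟫_ℂ := by
        rw [← inner_add_left]
        have h2 : T (η j) + S (η j) = ((‖T‖ : ℝ) : ℂ) • (η j) := by
          have h3 : ((‖T‖ : ℝ) : ℂ) • (η j) = (‖T‖ : ℝ) • (η j) := by
            rw [← Complex.coe_algebraMap, algebraMap_smul]
          rw [h3, hS]
          simp
        rw [h2, inner_smul_left, Complex.conj_ofReal]
      rw [← mul_add, hTS]; ring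
    have hreal : (∑ i, ‖u i‖ ^ 2) + ‖w‖ ^ 2 = ‖T‖ * ‖x‖ ^ 2 := by
      have h' := congrArg Complex.re hkey
      simpa [Complex.re_sum, Complex.add_re, Complex.mul_re, Complex.ofReal_re,
        Complex.ofReal_im, ru, ← Complex.ofReal_pow] using h'
    have := sq_nonneg ‖w‖
    linarith
  have hv : ∀ (p : ℕ) (α : Fin p → H) (β : Fin p → K),
      ∑ i, ‖∑ k, tp (ContinuousLinearMap.adjoint (s i) (α k)) (β k)‖ ^ 2
        ≤ ‖A‖ * ‖∑ k, tp (α k) (β k)‖ ^ 2 := by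
    intro p α β
    set S : H →L[ℂ] H := ‖A‖ • 1 - A with hS
    have hS0 : (0 : H →L[ℂ] H) ≤ S :=
      sub_nonneg.mpr (selfadj_le_norm_smul_one A hA0.isSelfAdjoint)
    obtain ⟨R, hR⟩ := exists_adjoint_comp_eq S hS0
    set w : L := ∑ k, tp (R (α k)) (β k) with hw
    set v : Fin n → L := fun i => ∑ k, tp (adjoint (s i) (α k)) (β k) with hvd
    set y : L := ∑ k, tp (α k) (β k) with hy
    have e1 : (∑ i, ⟪v i, v i⟫_ℂ)
        = ∑ k, ∑ k', ⟪A (α k), α k'⟫_ℂ * ⟪β k, β k'⟫_ℂ := by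
      have h0 : ∀ i : Fin n, ⟪v i, v i⟫_ℂ
          = ∑ k, ∑ k', ⟪adjoint (s i) (α k), adjoint (s i) (α k')⟫_ℂ * ⟪β k, β k'⟫_ℂ :=
        fun i => hexp _ _ _ _
      rw [Finset.sum_congr rfl fun i _ => h0 i, Finset.sum_comm]
      refine Finset.sum_congr rfl fun k _ => ?_
      rw [Finset.sum_comm]
      refine Finset.sum_congr rfl fun k' _ => ?_
      rw [← Finset.sum_mul]
      congr 1
      rw [hA, ContinuousLinearMap.sum_apply, sum_inner]
      refine Finset.sum_congr rfl fun i _ => ?_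
      rw [ContinuousLinearMap.comp_apply]
      exact ContinuousLinearMap.adjoint_inner_right (s i) _ _
    have e2 : ⟪w, w⟫_ℂ = ∑ k, ∑ k', ⟪S (α k), α k'⟫_ℂ * ⟪β k, β k'⟫_ℂ := by
      rw [hw, hexp]
      refine Finset.sum_congr rfl fun k _ => Finset.sum_congr rfl fun k' _ => ?_
      congr 1
      rw [← hR, ContinuousLinearMap.comp_apply, ContinuousLinearMap.adjoint_inner_left]
    have e3 : ⟪y, y⟫_ℂ = ∑ k, ∑ k', ⟪α k, α k'⟫_ℂ * ⟪β k, β k'⟫_ℂ := hexp _ _ _ _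
    have hkey : (∑ i, ⟪v i, v i⟫_ℂ) + ⟪w, w⟫_ℂ = (‖A‖ : ℂ) * ⟪y, y⟫_ℂ := by
      rw [e1, e2, e3, ← Finset.sum_add_distrib, Finset.mul_sum]
      refine Finset.sum_congr rfl fun k _ => ?_
      rw [← Finset.sum_add_distrib, Finset.mul_sum]
      refine Finset.sum_congr rfl fun k' _ => ?_
      have hAS : ⟪A (α k), α k'⟫_ℂ + ⟪S (α k), α k'⟫_ℂ
          = (‖A‖ : ℂ) * ⟪α k, α k'⟫_ℂ := by
        rw [← inner_add_left]
        have h2 : A (α k) + S (α k) = ((‖A‖ : ℝ) : ℂ) • (α k) := by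
          have h3 : ((‖A‖ : ℝ) : ℂ) • (α k) = (‖A‖ : ℝ) • (α k) := by
            rw [← Complex.coe_algebraMap, algebraMap_smul]
          rw [h3, hS]
          simp
        rw [h2, inner_smul_left, Complex.conj_ofReal]
      rw [← add_mul, hAS]; ring
    have hreal : (∑ i, ‖v i‖ ^ 2) + ‖w‖ ^ 2 = ‖A‖ * ‖y‖ ^ 2 := by
      have h' := congrArg Complex.re hkey
      simpa [Complex.re_sum, Complex.add_re, Complex.mul_re, Complex.ofReal_re,
        Complex.ofReal_im, ru, ← Complex.ofReal_pow] using h'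
    have := sq_nonneg ‖w‖
    linarith
  -- main inequality on elementary-sum vectors
  have hmain : ∀ (m : ℕ) (ξ : Fin m → H) (η : Fin m → K) (p : ℕ) (α : Fin p → H)
      (β : Fin p → K),
      ‖⟪V (∑ j, tp (ξ j) (η j)), ∑ k, tp (α k) (β k)⟫_ℂ‖
        ≤ C * (‖∑ j, tp (ξ j) (η j)‖ * ‖∑ k, tp (α k) (β k)‖) := by
    intro m ξ η p α β
    set x : L := ∑ j, tp (ξ j) (η j) with hx
    set y : L := ∑ k, tp (α k) (β k) with hy
    set u : Fin n → L := fun i => ∑ j, tp (ξ j) (t i (η j)) with hud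
    set v : Fin n → L := fun i => ∑ k, tp (adjoint (s i) (α k)) (β k) with hvd
    have hinner : ⟪V x, y⟫_ℂ = ∑ i, ⟪u i, v i⟫_ℂ := by
      have l1 : ⟪V x, y⟫_ℂ
          = ∑ j, ∑ i, ∑ k, ⟪s i (ξ j), α k⟫_ℂ * ⟪t i (η j), β k⟫_ℂ := by
        rw [hx, map_sum, sum_inner]
        refine Finset.sum_congr rfl fun j _ => ?_
        rw [hV, sum_inner]
        refine Finset.sum_congr rfl fun i _ => ?_
        rw [hy, inner_sum]
        exact Finset.sum_congr rfl fun k _ => htp _ _ _ _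
      have l2 : ∀ i, ⟪u i, v i⟫_ℂ
          = ∑ j, ∑ k, ⟪s i (ξ j), α k⟫_ℂ * ⟪t i (η j), β k⟫_ℂ := by
        intro i
        have hu' : u i = ∑ j, tp (ξ j) (t i (η j)) := rfl
        have hv' : v i = ∑ k, tp (ContinuousLinearMap.adjoint (s i) (α k)) (β k) := rfl
        rw [hu', hv', hexp]
        exact Finset.sum_congr rfl fun j _ => Finset.sum_congr rfl fun k _ => by
          rw [ContinuousLinearMap.adjoint_inner_right]
      rw [l1, Finset.sum_comm]
      exact Finset.sum_congr rfl fun i _ => (l2 i).symm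
    calc ‖⟪V x, y⟫_ℂ‖ = ‖∑ i, ⟪u i, v i⟫_ℂ‖ := by rw [hinner]
      _ ≤ ∑ i, ‖⟪u i, v i⟫_ℂ‖ := norm_sum_le _ _
      _ ≤ ∑ i, ‖u i‖ * ‖v i‖ :=
          Finset.sum_le_sum fun i _ => norm_inner_le_norm _ _
      _ ≤ Real.sqrt (∑ i, ‖u i‖ ^ 2) * Real.sqrt (∑ i, ‖v i‖ ^ 2) :=
          Real.sum_mul_le_sqrt_mul_sqrt _ _ _
      _ ≤ Real.sqrt (‖T‖ * ‖x‖ ^ 2) * Real.sqrt (‖A‖ * ‖y‖ ^ 2) := by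
          gcongr
          · exact hu m ξ η
          · exact hv p α β
      _ = C * (‖x‖ * ‖y‖) := by
          rw [Real.sqrt_mul (norm_nonneg T), Real.sqrt_mul (norm_nonneg A),
            Real.sqrt_sq (norm_nonneg x), Real.sqrt_sq (norm_nonneg y), hC]
          ring
  -- description of the span
  have hspan : ∀ z ∈ Submodule.span ℂ (Set.range fun p : H × K => tp p.1 p.2),
      ∃ (m : ℕ) (ξ : Fin m → H) (η : Fin m → K), z = ∑ j, tp (ξ j) (η j) := by
    intro z hz
    induction hz using Submodule.span_induction with
    | mem z hz =>
        obtain ⟨⟨a, b⟩, rfl⟩ := hz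
        exact ⟨1, fun _ => a, fun _ => b, by simp⟩
    | zero => exact ⟨0, Fin.elim0, Fin.elim0, by simp⟩
    | add z₁ z₂ _ _ h1 h2 =>
        obtain ⟨m₁, ξ₁, η₁, rfl⟩ := h1
        obtain ⟨m₂, ξ₂, η₂, rfl⟩ := h2
        refine ⟨m₁ + m₂, Fin.append ξ₁ ξ₂, Fin.append η₁ η₂, ?_⟩
        rw [Fin.sum_univ_add]
        simp [Fin.append_left, Fin.append_right]
    | smul c z _ h =>
        obtain ⟨m, ξ, η, rfl⟩ := h
        refine ⟨m, fun j => c • ξ j, η, ?_⟩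
        rw [Finset.smul_sum]
        exact Finset.sum_congr rfl fun j _ => by rw [map_smul, LinearMap.smul_apply]
  have hC0 : 0 ≤ C := mul_nonneg (Real.sqrt_nonneg _) (Real.sqrt_nonneg _)
  -- extend to all of L by density
  set M : Submodule ℂ L := Submodule.span ℂ (Set.range fun p : H × K => tp p.1 p.2)
    with hM
  have hdense' : ∀ z : L, z ∈ closure (M : Set L) := by
    intro z
    have : z ∈ M.topologicalClosure := by rw [hdense]; trivial
    exact this
  have step1 : ∀ x ∈ M, ∀ z : L, ‖⟪V x, z⟫_ℂ‖ ≤ C * (‖x‖ * ‖z‖) := by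
    intro x hx z
    obtain ⟨m, ξ, η, rfl⟩ := hspan x hx
    have hcl : IsClosed {z : L | ‖⟪V (∑ j, tp (ξ j) (η j)), z⟫_ℂ‖
        ≤ C * (‖∑ j, tp (ξ j) (η j)‖ * ‖z‖)} := by
      apply isClosed_le
      · exact (Continuous.inner continuous_const continuous_id).norm
      · exact (continuous_const.mul (continuous_const.mul continuous_norm))
    have hsub : (M : Set L) ⊆ {z : L | ‖⟪V (∑ j, tp (ξ j) (η j)), z⟫_ℂ‖
        ≤ C * (‖∑ j, tp (ξ j) (η j)‖ * ‖z‖)} := by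
      intro y hy
      obtain ⟨p, α, β, rfl⟩ := hspan y hy
      exact hmain m ξ η p α β
    exact (hcl.closure_subset_iff.mpr hsub) (hdense' z)
  have step2 : ∀ x ∈ M, ‖V x‖ ≤ C * ‖x‖ := by
    intro x hx
    have h := step1 x hx (V x)
    have h1 : ‖V x‖ ^ 2 ≤ C * (‖x‖ * ‖V x‖) := by
      calc ‖V x‖ ^ 2 = (⟪V x, V x⟫_ℂ).re := (ru _).symm
        _ ≤ ‖⟪V x, V x⟫_ℂ‖ := Complex.re_le_norm _
        _ ≤ C * (‖x‖ * ‖V x‖) := h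
    rcases eq_or_lt_of_le (norm_nonneg (V x)) with h0 | h0
    · rw [← h0]; positivity
    · nlinarith
  have step3 : ∀ x : L, ‖V x‖ ≤ C * ‖x‖ := by
    intro x
    have hcl : IsClosed {x : L | ‖V x‖ ≤ C * ‖x‖} :=
      isClosed_le (V.continuous.norm) (continuous_const.mul continuous_norm)
    exact (hcl.closure_subset_iff.mpr step2) (hdense' x)
  exact V.opNorm_le_bound hC0 step3
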